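/- Let f : ℝ^n → ℝ be bounded below and Lipschitz continuous, let γ ∈ (0,1) and M ∈ ℕ. Let {w^k} ⊂ ℝ^n be a sequence and for each k set R^k = max_{0 ≤ j ≤ min(k,M)} f(w^{k−j}). Suppose that for every k, f(w^{k+1}) ≤ R^k − γ min{ ‖w^{k+1} − w^k‖, ‖w^{k+1} − w^k‖² }. Then: (i) f(w^k) ≤ f(w^0) for all k, i.e. w^k ∈ L(w^0) for all k; (ii) the sequences {R^k} and {f(w^k)} are both convergent and have the same limit; (iii) lim_{k→∞} ‖w^{k+1} − w^k‖ = 0. -/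

import Mathlib

open Filter Finset

lemma aux_phi_to_zero {γ : ℝ} (hγ : 0 < γ) {u : ℕ → ℝ} (hu : ∀ k, 0 ≤ u k)
    (h : Tendsto (fun k => γ * min (u k) ((u k) ^ 2)) atTop (nhds 0)) :
    Tendsto u atTop (nhds 0) := by
  rw [Metric.tendsto_atTop] at h ⊢
  intro ε hε
  have hδ : 0 < γ * min ε (ε ^ 2) := by positivity
  obtain ⟨N, hN⟩ := h _ hδ
  refine ⟨N, fun k hk => ?_⟩
  have h1 := hN k hk
  rw [Real.dist_eq, sub_zero] at h1 ⊢
  have hnn : 0 ≤ γ * min (u k) ((u k) ^ 2) := by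
    have := hu k
    positivity
  rw [abs_of_nonneg hnn] at h1
  rw [abs_of_nonneg (hu k)]
  by_contra hc
  push_neg at hc
  have : min ε (ε ^ 2) ≤ min (u k) ((u k) ^ 2) :=
    min_le_min hc (by nlinarith [hu k])
  nlinarith

lemma aux_abs_telescope (g s : ℕ → ℝ) (L : ℝ)
    (h : ∀ i, |g (i + 1) - g i| ≤ L * s i) (a d : ℕ) :
    |g (a + d) - g a| ≤ ∑ i ∈ Finset.range d, L * s (a + i) := by
  induction d with
  | zero => simp
  | succ d ih =>
    rw [Finset.sum_range_succ]
    calc |g (a + (d + 1)) - g a|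
        ≤ |g (a + (d + 1)) - g (a + d)| + |g (a + d) - g a| := by
          have := abs_sub_le (g (a + (d + 1))) (g (a + d)) (g a)
          linarith
      _ ≤ (∑ i ∈ Finset.range d, L * s (a + i)) + L * s (a + d) := by
          have h1 := h (a + d)
          have : a + d + 1 = a + (d + 1) := by omega
          rw [this] at h1
          linarith


/-- `refMax g M k = max_{0 ≤ j ≤ min(k,M)} g (k - j)`, the nonmonotone reference
maximum over the last `min(k,M)+1` values. -/
noncomputable def refMax (g : ℕ → ℝ) (M k : ℕ) : ℝ :=
  (Finset.range (min k M + 1)).sup' Finset.nonempty_range_add_one fun j => g (k - j)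

/-- Proposition `propgrippo2007_1` on the NMCMA iterates.
If `f` is bounded below and Lipschitz, `R^k = max_{0≤j≤min(k,M)} f(w^{k-j})`,
and `f(w^{k+1}) ≤ R^k - γ min{‖w^{k+1}-w^k‖, ‖w^{k+1}-w^k‖²}` for all `k`, then
(i) `f(w^k) ≤ f(w^0)` for all `k`; (ii) `{R^k}` and `{f(w^k)}` converge to a
common limit; (iii) `‖w^{k+1} - w^k‖ → 0`. -/
theorem stmt_15 {n : ℕ}
    (f : EuclideanSpace ℝ (Fin n) → ℝ)
    (hbdd : BddBelow (Set.range f))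
    (L' : ℝ) (hL' : 0 < L')
    (hlip : ∀ u v : EuclideanSpace ℝ (Fin n), |f u - f v| ≤ L' * ‖u - v‖)
    (γ : ℝ) (hγ : γ ∈ Set.Ioo (0 : ℝ) 1)
    (M : ℕ)
    (w : ℕ → EuclideanSpace ℝ (Fin n)) (R : ℕ → ℝ)
    (hR : ∀ k, R k = refMax (fun k => f (w k)) M k)
    (hdecr : ∀ k, f (w (k + 1)) ≤
      R k - γ * min ‖w (k + 1) - w k‖ (‖w (k + 1) - w k‖ ^ 2)) :
    (∀ k, f (w k) ≤ f (w 0)) ∧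
    (∃ l : ℝ, Tendsto R atTop (nhds l) ∧
      Tendsto (fun k => f (w k)) atTop (nhds l)) ∧
    Tendsto (fun k => ‖w (k + 1) - w k‖) atTop (nhds 0) := by
  obtain ⟨hγ0, hγ1⟩ := hγ
  set g : ℕ → ℝ := fun k => f (w k) with hg
  set s : ℕ → ℝ := fun k => ‖w (k + 1) - w k‖ with hs
  have hs0 : ∀ k, 0 ≤ s k := fun k => norm_nonneg _
  have hLips : ∀ i, |g (i + 1) - g i| ≤ L' * s i := fun i => hlip _ _
  have hphi0 : ∀ k, 0 ≤ γ * min (s k) (s k ^ 2) := by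
    intro k; have := hs0 k; positivity
  have hdecr' : ∀ k, g (k + 1) ≤ R k - γ * min (s k) (s k ^ 2) := hdecr
  -- lower bound
  obtain ⟨c, hc⟩ := hbdd
  have hcg : ∀ k, c ≤ g k := fun k => hc ⟨w k, rfl⟩
  -- fact A
  have factA : ∀ k j, j ≤ min k M → g (k - j) ≤ R k := by
    intro k j hj
    rw [hR k]
    exact Finset.le_sup' (fun j => g (k - j)) (Finset.mem_range.mpr (Nat.lt_succ_of_le hj))
  have hgR : ∀ k, g k ≤ R k := by
    intro k
    have := factA k 0 (Nat.zero_le _)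
    simpa using this
  -- R step decrease
  have factB : ∀ k, R (k + 1) ≤ R k := by
    intro k
    rw [hR (k + 1)]
    apply Finset.sup'_le
    intro j hj
    rw [Finset.mem_range] at hj
    match j with
    | 0 =>
      simp only [Nat.sub_zero]
      have := hdecr' k
      have := hphi0 k
      linarith
    | (i + 1) =>
      have hik : i ≤ min k M := by omega
      have : k + 1 - (i + 1) = k - i := by omega
      rw [this]
      exact factA k i hik
  have hRanti : Antitone R := antitone_nat_of_succ_le factB
  have hR0 : R 0 = g 0 := by
    rw [hR 0]
    simp [refMax]
  -- (i)
  have part1 : ∀ k, g k ≤ g 0 := by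
    intro k
    calc g k ≤ R k := hgR k
      _ ≤ R 0 := hRanti (Nat.zero_le k)
      _ = g 0 := hR0
  -- R converges
  have hRbdd : BddBelow (Set.range R) := by
    refine ⟨c, ?_⟩
    rintro x ⟨k, rfl⟩
    exact le_trans (hcg k) (hgR k)
  set l : ℝ := ⨅ k, R k with hl
  have hRl : Tendsto R atTop (nhds l) := tendsto_atTop_ciInf hRanti hRbdd
  -- the argmax function
  have hch : ∀ k, ∃ j, j ≤ min k M ∧ R k = g (k - j) := by
    intro k
    obtain ⟨j, hj1, hj2⟩ := Finset.exists_mem_eq_sup'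
      (s := Finset.range (min k M + 1)) Finset.nonempty_range_add_one (fun j => g (k - j))
    refine ⟨j, ?_, ?_⟩
    · have := Finset.mem_range.mp hj1; omega
    · rw [hR k]; simp only [refMax]; exact hj2
  choose jf hjf1 hjf2 using hch
  have hjfM : ∀ k, jf k ≤ M := fun k => le_trans (hjf1 k) (min_le_right _ _)
  have hjfk : ∀ k, jf k ≤ k := fun k => le_trans (hjf1 k) (min_le_left _ _)
  -- shifted R limits
  have hRshift : ∀ c' : ℕ, Tendsto (fun k => R (k - c')) atTop (nhds l) :=
    fun c' => hRl.comp (tendsto_sub_atTop_nat c')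
  -- main induction
  have main : ∀ jj : ℕ, Tendsto (fun k => g (k - jf k - jj)) atTop (nhds l) ∧
      Tendsto (fun k => s (k - jf k - (jj + 1))) atTop (nhds 0) := by
    intro jj
    induction jj with
    | zero =>
      have hgl0 : Tendsto (fun k => g (k - jf k - 0)) atTop (nhds l) := by
        have : (fun k => g (k - jf k - 0)) = R := by
          funext k
          rw [Nat.sub_zero, ← hjf2 k]
        rw [this]; exact hRl
      refine ⟨hgl0, ?_⟩
      refine aux_phi_to_zero hγ0 (fun _ => hs0 _) ?_
      have hub : ∀ᶠ k in atTop, γ * min (s (k - jf k - 1)) (s (k - jf k - 1) ^ 2) ≤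
          R (k - (M + 1)) - R k := by
        filter_upwards [eventually_ge_atTop (M + 2)] with k hk
        have h1 : k - jf k - 1 + 1 = k - jf k := by
          have := hjfM k; omega
        have h2 := hdecr' (k - jf k - 1)
        rw [h1] at h2
        have h3 : R (k - jf k - 1) ≤ R (k - (M + 1)) := by
          apply hRanti; have := hjfM k; omega
        have h4 : R k = g (k - jf k) := hjf2 k
        linarith
      refine squeeze_zero' (Eventually.of_forall fun k => hphi0 _) hub ?_
      have := (hRshift (M + 1)).sub hRl
      simpa using this
    | succ jj ih =>
      obtain ⟨ihg, ihs⟩ := ih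
      -- g (ℓ k - (jj+1)) → l
      have hdiff : Tendsto (fun k => g (k - jf k - (jj + 1)) - g (k - jf k - jj))
          atTop (nhds 0) := by
        apply squeeze_zero_norm' (a := fun k => L' * s (k - jf k - (jj + 1)))
        · filter_upwards [eventually_ge_atTop (M + jj + 2)] with k hk
          have h1 : k - jf k - (jj + 1) + 1 = k - jf k - jj := by
            have := hjfM k; omega
          have := hLips (k - jf k - (jj + 1))
          rw [h1] at this
          rw [Real.norm_eq_abs, ← abs_neg]
          simpa [neg_sub] using this
        · have := ihs.const_mul L'
          simpa using this
      have hgl1 : Tendsto (fun k => g (k - jf k - (jj + 1))) atTop (nhds l) := by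
        have := hdiff.add ihg
        simpa using this
      refine ⟨hgl1, ?_⟩
      refine aux_phi_to_zero hγ0 (fun _ => hs0 _) ?_
      have hub : ∀ᶠ k in atTop,
          γ * min (s (k - jf k - (jj + 2))) (s (k - jf k - (jj + 2)) ^ 2) ≤
          R (k - (M + jj + 2)) - g (k - jf k - (jj + 1)) := by
        filter_upwards [eventually_ge_atTop (M + jj + 3)] with k hk
        have h1 : k - jf k - (jj + 2) + 1 = k - jf k - (jj + 1) := by
          have := hjfM k; omega
        have h2 := hdecr' (k - jf k - (jj + 2))
        rw [h1] at h2
        have h3 : R (k - jf k - (jj + 2)) ≤ R (k - (M + jj + 2)) := by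
          apply hRanti; have := hjfM k; omega
        linarith
      refine squeeze_zero' (Eventually.of_forall fun k => hphi0 _) hub ?_
      have := (hRshift (M + jj + 2)).sub hgl1
      simpa using this
  -- (iii): s → 0
  have hsall : Tendsto s atTop (nhds 0) := by
    rw [Metric.tendsto_atTop]
    intro ε hε
    have hev : ∀ᶠ k in atTop, ∀ i ∈ Finset.range (M + 1),
        dist (s (k - jf k - (i + 1))) 0 < ε := by
      rw [eventually_all_finset]
      intro i _
      exact (main i).2 (Metric.ball_mem_nhds 0 hε)
    obtain ⟨N, hN⟩ := eventually_atTop.mp hev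
    refine ⟨N, fun k hk => ?_⟩
    set m := k + M + 1 with hm
    have hmN : m ≥ N := by omega
    have h1 : k + 1 ≤ m - jf m := by have := hjfM m; omega
    have h2 : m - jf m ≤ m := by omega
    set i := m - jf m - k - 1 with hi
    have hiM : i ∈ Finset.range (M + 1) := Finset.mem_range.mpr (by omega)
    have := hN m hmN i hiM
    have heq : m - jf m - (i + 1) = k := by omega
    rwa [heq] at this
  -- (ii): g → l
  have habs : ∀ k, |g k - R k| ≤ ∑ i ∈ Finset.range (k - (k - jf k)), L' * s (k - jf k + i) := by
    intro k
    have hkeq : k - jf k + (k - (k - jf k)) = k := by have := hjfk k; omega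
    have := aux_abs_telescope g s L' hLips (k - jf k) (k - (k - jf k))
    rw [hkeq, ← hjf2 k] at this
    exact this
  have hDto0 : Tendsto (fun k => ∑ i ∈ Finset.range (k - (k - jf k)), L' * s (k - jf k + i))
      atTop (nhds 0) := by
    rw [Metric.tendsto_atTop]
    intro ε hε
    set cst : ℝ := (M : ℝ) * L' with hcst
    have hcst0 : 0 ≤ cst := by positivity
    set ε' : ℝ := ε / (cst + 1) with hε'
    have hε'0 : 0 < ε' := by positivity
    obtain ⟨N0, hN0⟩ := Metric.tendsto_atTop.mp hsall ε' hε'0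
    refine ⟨N0 + M, fun k hk => ?_⟩
    have hterm : ∀ i ∈ Finset.range (k - (k - jf k)), L' * s (k - jf k + i) ≤ L' * ε' := by
      intro i hi
      have hidx : k - jf k + i ≥ N0 := by have := hjfM k; have := hjfk k; omega
      have := hN0 _ hidx
      rw [Real.dist_eq, sub_zero, abs_of_nonneg (hs0 _)] at this
      exact mul_le_mul_of_nonneg_left this.le hL'.le
    have hsum : ∑ i ∈ Finset.range (k - (k - jf k)), L' * s (k - jf k + i) ≤
        (k - (k - jf k) : ℕ) * (L' * ε') := by
      calc ∑ i ∈ Finset.range (k - (k - jf k)), L' * s (k - jf k + i)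
          ≤ ∑ _i ∈ Finset.range (k - (k - jf k)), L' * ε' := Finset.sum_le_sum hterm
        _ = (k - (k - jf k) : ℕ) * (L' * ε') := by
            rw [Finset.sum_const, Finset.card_range, nsmul_eq_mul]
    have hcard : ((k - (k - jf k) : ℕ) : ℝ) ≤ (M : ℝ) := by
      have h1 : k - (k - jf k) ≤ M := by have := hjfM k; have := hjfk k; omega
      exact_mod_cast h1
    have hbound : ((k - (k - jf k) : ℕ) : ℝ) * (L' * ε') ≤ cst * ε' := by
      rw [hcst, mul_assoc]
      exact mul_le_mul_of_nonneg_right hcard (by positivity)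
    have hfin : cst * ε' < ε := by
      have h2 : (0 : ℝ) < cst + 1 := by linarith
      rw [hε', ← mul_div_assoc, div_lt_iff₀ h2]
      nlinarith
    have hnn : 0 ≤ ∑ i ∈ Finset.range (k - (k - jf k)), L' * s (k - jf k + i) :=
      Finset.sum_nonneg fun i _ => by have := hs0 (k - jf k + i); positivity
    rw [Real.dist_eq, sub_zero, abs_of_nonneg hnn]
    linarith
  have hgRdiff : Tendsto (fun k => g k - R k) atTop (nhds 0) := by
    apply squeeze_zero_norm' (a := fun k =>
      ∑ i ∈ Finset.range (k - (k - jf k)), L' * s (k - jf k + i))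
    · exact Eventually.of_forall fun k => by rw [Real.norm_eq_abs]; exact habs k
    · exact hDto0
  have hgl : Tendsto g atTop (nhds l) := by
    have := hgRdiff.add hRl
    simpa using this
  exact ⟨part1, ⟨l, hRl, hgl⟩, hsall⟩
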